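/- For every integer d ≥ 1 and every integer k ≥ 0, the number of noncrossing partitions of [d] with exactly k nonsingleton blocks equals the coefficient of x^k in g_d(x); equivalently, Σ_{π ∈ NC(d)} x^{block(π)} = g_d(x) in ℚ[x]. -/

import Mathlib

open Finset Polynomial
open scoped BigOperators

/-- The cyclic successor of `a` on `{1, …, d}`: `d ⊕ 1 = 1`. -/
def cyc (d a : ℕ) : ℕ := if a = d then 1 else a + 1

/-- The cyclic interval `[k, l]` of `{1, …, d}`; it is wrapped when `k > l`. -/
def cyclicInterval (d k l : ℕ) : Finset ℕ :=
  if k ≤ l then Finset.Icc k l else Finset.Icc k d ∪ Finset.Icc 1 l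

/-- `P` is a set partition of `{1, …, d}`, given as its finite set of blocks. -/
def IsPartitionOf (d : ℕ) (P : Finset (Finset ℕ)) : Prop :=
  (∀ B ∈ P, B ⊆ Finset.Icc 1 d ∧ B.Nonempty) ∧
    ∀ x ∈ Finset.Icc 1 d, ∃! B, B ∈ P ∧ x ∈ B

/-- `P` is noncrossing: there are no `a < b < c < e` with `a, c` in one block and
`b, e` in a different block. -/
def Noncrossing (P : Finset (Finset ℕ)) : Prop :=
  ∀ B₁ ∈ P, ∀ B₂ ∈ P, ∀ a b c e : ℕ,
    a < b → b < c → c < e → a ∈ B₁ → c ∈ B₁ → b ∈ B₂ → e ∈ B₂ → B₁ = B₂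

/-- `P` is a noncrossing set partition of `{1, …, d}`. -/
def IsNC (d : ℕ) (P : Finset (Finset ℕ)) : Prop :=
  IsPartitionOf d P ∧ Noncrossing P

open scoped Classical in
/-- The finite set `NC(d)` of noncrossing partitions of `{1, …, d}`. -/
noncomputable def NCd (d : ℕ) : Finset (Finset (Finset ℕ)) :=
  ((Finset.Icc 1 d).powerset.powerset).filter fun P => IsNC d P

/-- `block(π)`: the number of nonsingleton blocks. -/
def blockCount (P : Finset (Finset ℕ)) : ℕ :=
  (P.filter fun B => 2 ≤ B.card).card

/-- The number of singleton blocks of `P` contained in `U`. -/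
def singIn (P : Finset (Finset ℕ)) (U : Finset ℕ) : ℕ :=
  (P.filter fun B => B.card = 1 ∧ B ⊆ U).card

open scoped Classical in
/-- The number of `a ∈ A` that are antisingletons of `P`, i.e. such that `a` and its cyclic
successor lie in the same block of `P`.  Here `A` is the set of starting points of the
internal adjacencies of a family of cyclic intervals. -/
noncomputable def antiIn (d : ℕ) (P : Finset (Finset ℕ)) (A : Finset ℕ) : ℕ :=
  (A.filter fun a => ∃ B ∈ P, a ∈ B ∧ cyc d a ∈ B).card

/-- The weight `wt_S(π) = x^(block(π) + sing_S(π) + anti_S(π))`, where the family `S`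
is recorded by the union `U` of its intervals and the set `A` of starting points of its
internal adjacencies. -/
noncomputable def wt (d : ℕ) (P : Finset (Finset ℕ)) (U A : Finset ℕ) : Polynomial ℚ :=
  X ^ (blockCount P + singIn P U + antiIn d P A)

/-- Four elements of `ZMod n` occur in this cyclic order. -/
def cyclicOrdered (n : ℕ) (a b c e : ZMod n) : Prop :=
  ∃ r : ZMod n, (a - r).val < (b - r).val ∧ (b - r).val < (c - r).val ∧ (c - r).val < (e - r).val

/-- Two blocks on the cycle `ZMod n` cross. -/
def crosses (n : ℕ) (A B : Finset (ZMod n)) : Prop :=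
  ∃ a ∈ A, ∃ c ∈ A, ∃ b ∈ B, ∃ e ∈ B, cyclicOrdered n a b c e

/-- The embedding of `[d]` into the `2d`-cycle: `i ↦ 2i - 1`. -/
def embOrig (d i : ℕ) : ZMod (2 * d) := ((2 * i - 1 : ℕ) : ZMod (2 * d))

/-- The embedding of the copy `[d]'` into the `2d`-cycle: `i' ↦ 2(d - i) mod 2d`. -/
def embCopy (d i : ℕ) : ZMod (2 * d) := ((2 * (d - i) : ℕ) : ZMod (2 * d))

/-- The blocks of `P` (embedded via `embOrig`) together with the blocks of `Q`
(embedded via `embCopy`) form a noncrossing partition of the `2d`-cycle. -/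
def SUCompat (d : ℕ) (P Q : Finset (Finset ℕ)) : Prop :=
  (∀ B₁ ∈ P, ∀ B₂ ∈ P, B₁ ≠ B₂ →
      ¬ crosses (2 * d) (B₁.image (embOrig d)) (B₂.image (embOrig d))) ∧
  (∀ B₁ ∈ Q, ∀ B₂ ∈ Q, B₁ ≠ B₂ →
      ¬ crosses (2 * d) (B₁.image (embCopy d)) (B₂.image (embCopy d))) ∧
  ∀ B₁ ∈ P, ∀ B₂ ∈ Q, ¬ crosses (2 * d) (B₁.image (embOrig d)) (B₂.image (embCopy d))

/-- `P` refines into `Q`: every block of `P` is contained in a block of `Q`. -/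
def refines (P Q : Finset (Finset ℕ)) : Prop :=
  ∀ B ∈ P, ∃ B' ∈ Q, B ⊆ B'

/-- `Q` is the Simion–Ullman complement `α(P)`: it is a partition of `{1, …, d}`
(the copy `[d]'` being identified with `[d]`), the blocks of `P` and `Q` together form a
noncrossing partition of the `2d`-cycle, and `Q` is the coarsest such partition. -/
def IsSUComplement (d : ℕ) (P Q : Finset (Finset ℕ)) : Prop :=
  IsPartitionOf d Q ∧ SUCompat d P Q ∧
    ∀ R, IsPartitionOf d R → SUCompat d P R → refines R Q

/-- The toric `g`-polynomial of the `j`-dimensional cube: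
`g_j(x) = Σ_{m=0}^{⌊j/2⌋} Catalan(j-m)·binom(j-m, m)·(x-1)^m`. -/
noncomputable def gPoly (j : ℕ) : Polynomial ℚ :=
  ∑ m ∈ Finset.range (j / 2 + 1),
    (C ((catalan (j - m) * (j - m).choose m : ℕ) : ℚ)) * (X - 1) ^ m

/-- The polynomial `Q_{d,k}(x)`, `0 ≤ k ≤ d+1`. -/
noncomputable def Qpoly (d k : ℕ) : Polynomial ℚ :=
  if k = 0 then
    (X - 1) ^ (d + 1) +
      ∑ j ∈ Finset.range (d + 1),
        (C ((2 ^ (d - j) * d.choose j : ℕ) : ℚ)) * (X - 1) ^ (d - j) * gPoly j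
  else if k ≤ d then
    ∑ j ∈ Finset.Icc (k - 1) d,
      (C ((2 ^ (d - j) * ((d - k).choose (d - j) + (d + 1 - k).choose (d - j)) : ℕ) : ℚ)) *
        (X - 1) ^ (d - j) * gPoly j
  else gPoly d

/-- The polynomial `C_{d,i,j}(x) = Σ_{k=j+1}^{i+j} (1/2)^i binom(i-1, k-1-j) Q_{d,k}(x)`. -/
noncomputable def Cpoly (d i j : ℕ) : Polynomial ℚ :=
  ∑ k ∈ Finset.Icc (j + 1) (i + j),
    (C ((1 / 2 : ℚ) ^ i * ((i - 1).choose (k - 1 - j) : ℚ))) * Qpoly d k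

/-- `wt_k(π)`: for `1 ≤ k ≤ d` the weight w.r.t. `S = {[k,d]}`; for `k = 0` the weight
w.r.t. the full circle `[1,d]^*`; for `k = d+1` the weight w.r.t. `S = ∅`. -/
noncomputable def wtk (d k : ℕ) (P : Finset (Finset ℕ)) : Polynomial ℚ :=
  if k = 0 then wt d P (Finset.Icc 1 d) (Finset.Icc 1 d)
  else if k ≤ d then wt d P (Finset.Icc k d) (Finset.Icc k d \ {d})
  else wt d P ∅ ∅

/-- The `t`-th left endpoint of a family of cyclic intervals given as a list of pairs. -/
def nthK (L : List (ℕ × ℕ)) (t : ℕ) : ℕ := (L.getD t (0, 0)).1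

/-- The `t`-th right endpoint of a family of cyclic intervals given as a list of pairs. -/
def nthL (L : List (ℕ × ℕ)) (t : ℕ) : ℕ := (L.getD t (0, 0)).2

/-- The list `[(k₁,l₁),…,(k_i,l_i)]` is a family of pairwise disjoint cyclic intervals of
`[d]` in standard form: `1 ≤ k₁ ≤ l₁ < k₂ ≤ l₂ < … < k_i ≤ d`, and either
`k_i ≤ l_i ≤ d` or `1 ≤ l_i < k₁` (only the last interval may be wrapped). -/
def StandardForm (d : ℕ) (L : List (ℕ × ℕ)) : Prop :=
  L ≠ [] ∧ 1 ≤ nthK L 0 ∧ nthK L (L.length - 1) ≤ d ∧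
  (∀ t, t + 1 < L.length → nthK L t ≤ nthL L t ∧ nthL L t < nthK L (t + 1)) ∧
  ((nthK L (L.length - 1) ≤ nthL L (L.length - 1) ∧ nthL L (L.length - 1) ≤ d) ∨
    (1 ≤ nthL L (L.length - 1) ∧ nthL L (L.length - 1) < nthK L 0))

/-- The dual family `S'` of a standard-form family
`S = [(k₁,l₁),…,(k_i,l_i)]`, namely
`S' = [(d-k_i+1, d-l_{i-1}), …, (d-k₂+1, d-l₁), (d-k₁+1, d-l_i)]`,
where endpoints are taken in `{1, …, d}` cyclically (so `d - l` means `d` when `l = d`). -/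
def dualFam (d : ℕ) (L : List (ℕ × ℕ)) : List (ℕ × ℕ) :=
  (List.range L.length).map fun t =>
    (d - nthK L (L.length - 1 - t) + 1,
     d - (nthL L ((2 * L.length - 2 - t) % L.length)) % d)

/-- A (generalized) family of cyclic intervals of `[d]`: the empty family `∅`, the full
circle `[1,d]^*`, or a finite list of cyclic intervals. -/
inductive Fam where
  | empty : Fam
  | full : Fam
  | fam (L : List (ℕ × ℕ)) : Fam

/-- The union of the intervals of a generalized family. -/
def famU (d : ℕ) : Fam → Finset ℕ
  | Fam.empty => ∅
  | Fam.full => Finset.Icc 1 d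
  | Fam.fam L => L.foldr (fun p acc => cyclicInterval d p.1 p.2 ∪ acc) ∅

/-- The set of starting points of internal adjacencies of a generalized family. -/
def famAdj (d : ℕ) : Fam → Finset ℕ
  | Fam.empty => ∅
  | Fam.full => Finset.Icc 1 d
  | Fam.fam L => L.foldr (fun p acc => (cyclicInterval d p.1 p.2 \ {p.2}) ∪ acc) ∅

/-- The dual `S'` of a generalized family `S`, with `∅' = [1,d]^*` and `([1,d]^*)' = ∅`. -/
def famDual (d : ℕ) : Fam → Fam
  | Fam.empty => Fam.full
  | Fam.full => Fam.empty
  | Fam.fam L => Fam.fam (dualFam d L)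

/-- The generalized family is in standard form (`∅` and `[1,d]^*` always are). -/
def FamStd (d : ℕ) : Fam → Prop
  | Fam.empty => True
  | Fam.full => True
  | Fam.fam L => StandardForm d L

/-- `binom(n, r)` for an integer lower entry `r`, which is `0` whenever `r < 0`. -/
def chooseZ (n : ℕ) (r : ℤ) : ℕ := if 0 ≤ r then n.choose r.toNat else 0

section AuxNC
open scoped Classical

/-- Partition of an arbitrary ground set. -/
def IsPartOn (s : Finset ℕ) (P : Finset (Finset ℕ)) : Prop :=
  (∀ B ∈ P, B ⊆ s ∧ B.Nonempty) ∧ ∀ x ∈ s, ∃! B, B ∈ P ∧ x ∈ B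

noncomputable def NCOn (s : Finset ℕ) : Finset (Finset (Finset ℕ)) :=
  (s.powerset.powerset).filter fun P => IsPartOn s P ∧ Noncrossing P

noncomputable def PP (s : Finset ℕ) : Polynomial ℚ :=
  ∑ P ∈ NCOn s, X ^ blockCount P

lemma mem_NCOn {s : Finset ℕ} {P : Finset (Finset ℕ)} :
    P ∈ NCOn s ↔ IsPartOn s P ∧ Noncrossing P := by
  constructor
  · intro h; exact (Finset.mem_filter.1 h).2
  · intro h
    refine Finset.mem_filter.2 ⟨?_, h⟩
    simp only [Finset.mem_powerset]
    intro B hB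
    simpa only [Finset.mem_powerset] using (h.1.1 B hB).1

lemma NCd_eq (d : ℕ) : NCd d = NCOn (Finset.Icc 1 d) := by
  ext P
  simp only [NCd, NCOn, Finset.mem_filter]
  constructor <;> rintro ⟨h1, h2⟩ <;> exact ⟨h1, ⟨h2.1, h2.2⟩⟩

lemma blocks_eq {s : Finset ℕ} {P : Finset (Finset ℕ)} (h : IsPartOn s P)
    {B B' : Finset ℕ} {x : ℕ} (hB : B ∈ P) (hB' : B' ∈ P) (hx : x ∈ B) (hx' : x ∈ B') :
    B = B' := by
  have hxs : x ∈ s := (h.1 B hB).1 hx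
  obtain ⟨C, -, hC⟩ := h.2 x hxs
  rw [hC B ⟨hB, hx⟩, hC B' ⟨hB', hx'⟩]

noncomputable def blk (P : Finset (Finset ℕ)) (x : ℕ) : Finset ℕ :=
  (P.filter fun B => x ∈ B).sup id

lemma blk_eq {s : Finset ℕ} {P : Finset (Finset ℕ)} (h : IsPartOn s P)
    {B : Finset ℕ} {x : ℕ} (hB : B ∈ P) (hx : x ∈ B) : blk P x = B := by
  have hf : P.filter (fun B => x ∈ B) = {B} := by
    refine Finset.eq_singleton_iff_unique_mem.2 ⟨Finset.mem_filter.2 ⟨hB, hx⟩, ?_⟩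
    intro C hC
    exact blocks_eq h (Finset.mem_filter.1 hC).1 hB (Finset.mem_filter.1 hC).2 hx
  rw [blk, hf]; simp

lemma blk_mem {s : Finset ℕ} {P : Finset (Finset ℕ)} (h : IsPartOn s P)
    {x : ℕ} (hx : x ∈ s) : blk P x ∈ P ∧ x ∈ blk P x := by
  obtain ⟨B, ⟨hB, hxB⟩, -⟩ := h.2 x hx
  rw [blk_eq h hB hxB]; exact ⟨hB, hxB⟩

lemma Noncrossing_subset {P Q : Finset (Finset ℕ)} (hQP : Q ⊆ P)
    (h : Noncrossing P) : Noncrossing Q := by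
  intro B₁ h₁ B₂ h₂ a b c e hab hbc hce ha hc hb he
  exact h B₁ (hQP h₁) B₂ (hQP h₂) a b c e hab hbc hce ha hc hb he

lemma NCOn_empty : NCOn (∅ : Finset ℕ) = {∅} := by
  ext P
  simp only [Finset.mem_singleton, mem_NCOn]
  constructor
  · rintro ⟨⟨h1, -⟩, -⟩
    refine Finset.eq_empty_iff_forall_notMem.2 fun B hB => ?_
    obtain ⟨hsub, ⟨x, hx⟩⟩ := h1 B hB
    exact absurd (hsub hx) (Finset.notMem_empty x)
  · rintro rfl
    exact ⟨⟨fun B hB => absurd hB (Finset.notMem_empty B),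
      fun x hx => absurd hx (Finset.notMem_empty x)⟩,
      fun B hB => absurd hB (Finset.notMem_empty B)⟩

lemma blockCount_empty : blockCount (∅ : Finset (Finset ℕ)) = 0 := by
  simp [blockCount]

lemma PP_empty : PP (∅ : Finset ℕ) = 1 := by
  simp [PP, NCOn_empty, blockCount_empty]

lemma NCOn_singleton (a : ℕ) : NCOn ({a} : Finset ℕ) = {{{a}}} := by
  ext P
  simp only [Finset.mem_singleton, mem_NCOn]
  constructor
  · rintro ⟨⟨h1, h2⟩, -⟩
    obtain ⟨B, ⟨hB, haB⟩, -⟩ := h2 a (Finset.mem_singleton_self a)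
    have hBa : B = {a} :=
      Finset.Subset.antisymm (h1 B hB).1 (Finset.singleton_subset_iff.2 haB)
    refine Finset.eq_singleton_iff_unique_mem.2 ⟨hBa ▸ hB, ?_⟩
    intro C hC
    obtain ⟨hCsub, x, hxC⟩ := h1 C hC
    have hxa : x = a := Finset.mem_singleton.1 (hCsub hxC)
    have hxB : x ∈ B := by rw [hBa, hxa]; exact Finset.mem_singleton_self a
    rw [blocks_eq ⟨h1, h2⟩ hC hB hxC hxB, hBa]
  · rintro rfl
    refine ⟨⟨?_, ?_⟩, ?_⟩
    · intro B hB
      rw [Finset.mem_singleton.1 hB]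
      exact ⟨Finset.Subset.refl _, Finset.singleton_nonempty a⟩
    · intro x hx
      rw [Finset.mem_singleton.1 hx]
      exact ⟨{a}, ⟨Finset.mem_singleton_self _, Finset.mem_singleton_self _⟩,
        fun C hC => Finset.mem_singleton.1 hC.1⟩
    · intro B₁ h₁ B₂ h₂ a' b c e hab hbc hce ha hc hb he
      rw [Finset.mem_singleton.1 h₁, Finset.mem_singleton.1 h₂]

lemma PP_singleton (a : ℕ) : PP ({a} : Finset ℕ) = 1 := by
  have : blockCount ({{a}} : Finset (Finset ℕ)) = 0 := by
    simp [blockCount, Finset.filter_singleton]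
  simp [PP, NCOn_singleton, this]

lemma blockCount_image {s : Finset ℕ} {P : Finset (Finset ℕ)} (hP : ∀ B ∈ P, B ⊆ s)
    {f : ℕ → ℕ} (hinj : ∀ x ∈ s, ∀ y ∈ s, f x = f y → x = y) :
    blockCount (P.image (Finset.image f)) = blockCount P := by
  have hcard : ∀ B ∈ P, (B.image f).card = B.card := by
    intro B hB
    refine Finset.card_image_of_injOn fun x hx y hy hxy => ?_
    exact hinj x (hP B hB hx) y (hP B hB hy) hxy
  have himg : (P.image (Finset.image f)).filter (fun B => 2 ≤ B.card)
      = (P.filter fun B => 2 ≤ B.card).image (Finset.image f) := by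
    ext C
    simp only [Finset.mem_filter, Finset.mem_image]
    constructor
    · rintro ⟨⟨B, hB, rfl⟩, hc⟩
      exact ⟨B, ⟨hB, by rwa [hcard B hB] at hc⟩, rfl⟩
    · rintro ⟨B, ⟨hB, hc⟩, rfl⟩
      exact ⟨⟨B, hB, rfl⟩, by rwa [hcard B hB]⟩
  rw [blockCount, himg, blockCount]
  refine Finset.card_image_of_injOn fun B hB C hC hBC => ?_
  have hB' := (Finset.mem_filter.1 hB).1
  have hC' := (Finset.mem_filter.1 hC).1
  -- images equal implies sets equal
  ext x
  constructor
  · intro hx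
    have : f x ∈ C.image f := hBC ▸ Finset.mem_image_of_mem f hx
    obtain ⟨y, hy, hxy⟩ := Finset.mem_image.1 this
    have : y = x := hinj y (hP C hC' hy) x (hP B hB' hx) hxy
    rwa [← this]
  · intro hx
    have : f x ∈ B.image f := hBC ▸ Finset.mem_image_of_mem f hx
    obtain ⟨y, hy, hxy⟩ := Finset.mem_image.1 this
    have : y = x := hinj y (hP B hB' hy) x (hP C hC' hx) hxy
    rwa [← this]

lemma NCOn_image {s t : Finset ℕ} {f : ℕ → ℕ}
    (hf : ∀ x ∈ s, f x ∈ t) (hsurj : ∀ y ∈ t, ∃ x ∈ s, f x = y)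
    (hmono : ∀ x ∈ s, ∀ y ∈ s, x < y → f x < f y)
    {P : Finset (Finset ℕ)} (hP : P ∈ NCOn s) :
    P.image (Finset.image f) ∈ NCOn t := by
  obtain ⟨⟨hb, hc⟩, hnc⟩ := mem_NCOn.1 hP
  have hinj : ∀ x ∈ s, ∀ y ∈ s, f x = f y → x = y := by
    intro x hx y hy hxy
    rcases lt_trichotomy x y with h | h | h
    · exact absurd hxy (hmono x hx y hy h).ne
    · exact h
    · exact absurd hxy.symm (hmono y hy x hx h).ne
  refine mem_NCOn.2 ⟨⟨?_, ?_⟩, ?_⟩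
  · rintro C hC
    obtain ⟨B, hB, rfl⟩ := Finset.mem_image.1 hC
    refine ⟨fun y hy => ?_, ((hb B hB).2).image f⟩
    obtain ⟨x, hx, rfl⟩ := Finset.mem_image.1 hy
    exact hf x ((hb B hB).1 hx)
  · intro y hy
    obtain ⟨x, hx, rfl⟩ := hsurj y hy
    obtain ⟨B, ⟨hB, hxB⟩, -⟩ := hc x hx
    refine ⟨B.image f, ⟨Finset.mem_image_of_mem _ hB, Finset.mem_image_of_mem f hxB⟩, ?_⟩
    rintro C ⟨hC, hyC⟩
    obtain ⟨B', hB', rfl⟩ := Finset.mem_image.1 hC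
    obtain ⟨x', hx'B', hfx'⟩ := Finset.mem_image.1 hyC
    have hx' : x' ∈ s := (hb B' hB').1 hx'B'
    have : x' = x := hinj x' hx' x hx hfx'
    subst this
    rw [blocks_eq ⟨hb, hc⟩ hB' hB hx'B' hxB]
  · intro C₁ h₁ C₂ h₂ a b c e hab hbc hce ha hcc hbb he
    obtain ⟨B₁, hB₁, rfl⟩ := Finset.mem_image.1 h₁
    obtain ⟨B₂, hB₂, rfl⟩ := Finset.mem_image.1 h₂
    obtain ⟨a₀, ha₀, rfl⟩ := Finset.mem_image.1 ha
    obtain ⟨c₀, hc₀, rfl⟩ := Finset.mem_image.1 hcc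
    obtain ⟨b₀, hb₀, rfl⟩ := Finset.mem_image.1 hbb
    obtain ⟨e₀, he₀, rfl⟩ := Finset.mem_image.1 he
    have hma := (hb B₁ hB₁).1 ha₀
    have hmc := (hb B₁ hB₁).1 hc₀
    have hmb := (hb B₂ hB₂).1 hb₀
    have hme := (hb B₂ hB₂).1 he₀
    have lt1 : a₀ < b₀ := by
      rcases lt_trichotomy a₀ b₀ with h | h | h
      · exact h
      · subst h; exact absurd rfl hab.ne
      · exact absurd (hmono b₀ hmb a₀ hma h) (lt_asymm hab)
    have lt2 : b₀ < c₀ := by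
      rcases lt_trichotomy b₀ c₀ with h | h | h
      · exact h
      · subst h; exact absurd rfl hbc.ne
      · exact absurd (hmono c₀ hmc b₀ hmb h) (lt_asymm hbc)
    have lt3 : c₀ < e₀ := by
      rcases lt_trichotomy c₀ e₀ with h | h | h
      · exact h
      · subst h; exact absurd rfl hce.ne
      · exact absurd (hmono e₀ hme c₀ hmc h) (lt_asymm hce)
    rw [hnc B₁ hB₁ B₂ hB₂ a₀ b₀ c₀ e₀ lt1 lt2 lt3 ha₀ hc₀ hb₀ he₀]

lemma PP_congr {s t : Finset ℕ} (f g : ℕ → ℕ)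
    (hf : ∀ x ∈ s, f x ∈ t) (hg : ∀ y ∈ t, g y ∈ s)
    (hgf : ∀ x ∈ s, g (f x) = x) (hfg : ∀ y ∈ t, f (g y) = y)
    (hmono : ∀ x ∈ s, ∀ y ∈ s, x < y → f x < f y)
    (hmono' : ∀ x ∈ t, ∀ y ∈ t, x < y → g x < g y) :
    PP t = PP s := by
  have hsurj : ∀ y ∈ t, ∃ x ∈ s, f x = y := fun y hy => ⟨g y, hg y hy, hfg y hy⟩
  have hsurj' : ∀ x ∈ s, ∃ y ∈ t, g y = x := fun x hx => ⟨f x, hf x hx, hgf x hx⟩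
  have hinv : ∀ P ∈ NCOn t, (P.image (Finset.image g)).image (Finset.image f) = P := by
    intro P hP
    obtain ⟨⟨hb, -⟩, -⟩ := mem_NCOn.1 hP
    rw [Finset.image_image]
    have : ∀ B ∈ P, (Finset.image f ∘ Finset.image g) B = B := by
      intro B hB
      simp only [Function.comp_apply, Finset.image_image]
      rw [show B.image (f ∘ g) = B.image id from
        Finset.image_congr fun x hx => hfg x ((hb B hB).1 hx), Finset.image_id]
    calc P.image (Finset.image f ∘ Finset.image g) = P.image id := Finset.image_congr this
    _ = P := Finset.image_id
  have hinv' : ∀ P ∈ NCOn s, (P.image (Finset.image f)).image (Finset.image g) = P := by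
    intro P hP
    obtain ⟨⟨hb, -⟩, -⟩ := mem_NCOn.1 hP
    rw [Finset.image_image]
    have : ∀ B ∈ P, (Finset.image g ∘ Finset.image f) B = B := by
      intro B hB
      simp only [Function.comp_apply, Finset.image_image]
      rw [show B.image (g ∘ f) = B.image id from
        Finset.image_congr fun x hx => hgf x ((hb B hB).1 hx), Finset.image_id]
    calc P.image (Finset.image g ∘ Finset.image f) = P.image id := Finset.image_congr this
    _ = P := Finset.image_id
  refine Finset.sum_nbij' (fun P => P.image (Finset.image g))
    (fun P => P.image (Finset.image f))
    (fun P hP => NCOn_image hg hsurj' hmono' hP)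
    (fun P hP => NCOn_image hf hsurj hmono hP)
    (fun P hP => hinv P hP) (fun P hP => hinv' P hP) ?_
  intro P hP
  obtain ⟨⟨hb, -⟩, -⟩ := mem_NCOn.1 hP
  have hinj : ∀ x ∈ t, ∀ y ∈ t, g x = g y → x = y := by
    intro x hx y hy hxy
    rcases lt_trichotomy x y with h | h | h
    · exact absurd hxy (hmono' x hx y hy h).ne
    · exact h
    · exact absurd hxy.symm (hmono' y hy x hx h).ne
  rw [blockCount_image (fun B hB => (hb B hB).1) hinj]

lemma PP_Icc_shift (a b c : ℕ) : PP (Finset.Icc (a + c) (b + c)) = PP (Finset.Icc a b) := by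
  refine PP_congr (fun x => x + c) (fun x => x - c) ?_ ?_ ?_ ?_ ?_ ?_ <;>
    · intro x hx
      dsimp -failIfUnchanged only at *
      first
        | (intro y hy hxy
           dsimp -failIfUnchanged only at *
           rw [Finset.mem_Icc] at *
           omega)
        | (rw [Finset.mem_Icc] at *; omega)

lemma PP_Icc_eq (a b : ℕ) (ha : 1 ≤ a) : PP (Finset.Icc a b) = PP (Finset.Icc 1 (b + 1 - a)) := by
  rcases le_or_gt a b with h | h
  · have h1 : Finset.Icc a b = Finset.Icc (1 + (a - 1)) ((b + 1 - a) + (a - 1)) := by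
      congr 1 <;> omega
    rw [h1, PP_Icc_shift]
  · have h1 : Finset.Icc a b = ∅ := Finset.Icc_eq_empty (by omega)
    have h2 : Finset.Icc 1 (b + 1 - a) = ∅ := Finset.Icc_eq_empty (by omega)
    rw [h1, h2]

lemma erase_single_mem {s : Finset ℕ} {m : ℕ} (hm : m ∈ s)
    {P : Finset (Finset ℕ)} (hP : P ∈ NCOn s) (hmP : {m} ∈ P) :
    P.erase {m} ∈ NCOn (s.erase m) := by
  obtain ⟨⟨hb, hc⟩, hnc⟩ := mem_NCOn.1 hP
  refine mem_NCOn.2 ⟨⟨?_, ?_⟩, Noncrossing_subset (Finset.erase_subset _ _) hnc⟩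
  · intro B hB
    have hB' := Finset.mem_of_mem_erase hB
    have hBne : B ≠ {m} := Finset.ne_of_mem_erase hB
    refine ⟨fun x hx => Finset.mem_erase.2 ⟨?_, (hb B hB').1 hx⟩, (hb B hB').2⟩
    intro hxm
    subst hxm
    exact hBne (blocks_eq ⟨hb, hc⟩ hB' hmP hx (Finset.mem_singleton_self x))
  · intro x hx
    obtain ⟨hxm, hxs⟩ := Finset.mem_erase.1 hx
    obtain ⟨B, ⟨hB, hxB⟩, -⟩ := hc x hxs
    have hBne : B ≠ {m} := fun h => hxm (Finset.mem_singleton.1 (h ▸ hxB))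
    refine ⟨B, ⟨Finset.mem_erase.2 ⟨hBne, hB⟩, hxB⟩, ?_⟩
    rintro C ⟨hC, hxC⟩
    exact blocks_eq ⟨hb, hc⟩ (Finset.mem_of_mem_erase hC) hB hxC hxB

lemma insert_single_mem {s : Finset ℕ} {m : ℕ} (hm : m ∈ s)
    {Q : Finset (Finset ℕ)} (hQ : Q ∈ NCOn (s.erase m)) :
    insert ({m} : Finset ℕ) Q ∈ NCOn s := by
  obtain ⟨⟨hb, hc⟩, hnc⟩ := mem_NCOn.1 hQ
  refine mem_NCOn.2 ⟨⟨?_, ?_⟩, ?_⟩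
  · intro B hB
    rcases Finset.mem_insert.1 hB with rfl | hB'
    · exact ⟨Finset.singleton_subset_iff.2 hm, Finset.singleton_nonempty m⟩
    · exact ⟨(hb B hB').1.trans (Finset.erase_subset m s), (hb B hB').2⟩
  · intro x hx
    by_cases hxm : x = m
    · subst hxm
      refine ⟨{x}, ⟨Finset.mem_insert_self _ _, Finset.mem_singleton_self x⟩, ?_⟩
      rintro C ⟨hC, hxC⟩
      rcases Finset.mem_insert.1 hC with rfl | hC'
      · rfl
      · exact absurd ((hb C hC').1 hxC) (fun h => (Finset.mem_erase.1 h).1 rfl)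
    · obtain ⟨B, ⟨hB, hxB⟩, -⟩ := hc x (Finset.mem_erase.2 ⟨hxm, hx⟩)
      refine ⟨B, ⟨Finset.mem_insert_of_mem hB, hxB⟩, ?_⟩
      rintro C ⟨hC, hxC⟩
      rcases Finset.mem_insert.1 hC with rfl | hC'
      · exact absurd (Finset.mem_singleton.1 hxC) hxm
      · exact blocks_eq ⟨hb, hc⟩ hC' hB hxC hxB
  · intro B₁ h₁ B₂ h₂ a b c e hab hbc hce ha hcc hbb he
    rcases Finset.mem_insert.1 h₁ with rfl | h₁'
    · have : a = c := by
        rw [Finset.mem_singleton.1 ha, Finset.mem_singleton.1 hcc]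
      omega
    · rcases Finset.mem_insert.1 h₂ with rfl | h₂'
      · have : b = e := by
          rw [Finset.mem_singleton.1 hbb, Finset.mem_singleton.1 he]
        omega
      · exact hnc B₁ h₁' B₂ h₂' a b c e hab hbc hce ha hcc hbb he

lemma blockCount_insert_single (m : ℕ) (Q : Finset (Finset ℕ)) (hQ : {m} ∉ Q) :
    blockCount (insert ({m} : Finset ℕ) Q) = blockCount Q := by
  rw [blockCount, Finset.filter_insert, if_neg (by simp), blockCount]

lemma sum_single_block (s : Finset ℕ) (m : ℕ) (hm : m ∈ s) :
    ∑ P ∈ (NCOn s).filter (fun P => ({m} : Finset ℕ) ∈ P), (X : Polynomial ℚ) ^ blockCount P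
      = PP (s.erase m) := by
  rw [PP]
  refine Finset.sum_nbij' (fun P => P.erase {m}) (fun Q => insert ({m} : Finset ℕ) Q)
    ?_ ?_ ?_ ?_ ?_
  · intro P hP
    obtain ⟨hP', hmP⟩ := Finset.mem_filter.1 hP
    exact erase_single_mem hm hP' hmP
  · intro Q hQ
    refine Finset.mem_filter.2 ⟨insert_single_mem hm hQ, Finset.mem_insert_self _ _⟩
  · intro P hP
    exact Finset.insert_erase (Finset.mem_filter.1 hP).2
  · intro Q hQ
    refine Finset.erase_insert ?_
    intro hmQ
    obtain ⟨⟨hb, -⟩, -⟩ := mem_NCOn.1 hQ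
    exact (Finset.mem_erase.1 ((hb _ hmQ).1 (Finset.mem_singleton_self m))).1 rfl
  · intro P hP
    obtain ⟨hP', hmP⟩ := Finset.mem_filter.1 hP
    have hmE : ({m} : Finset ℕ) ∉ P.erase {m} := Finset.notMem_erase _ _
    conv_lhs => rw [← Finset.insert_erase hmP]
    rw [blockCount_insert_single m _ hmE]

lemma PP_split (s : Finset ℕ) (m : ℕ) (hm : m ∈ s) :
    PP s = PP (s.erase m)
      + ∑ P ∈ (NCOn s).filter (fun P => ({m} : Finset ℕ) ∉ P), (X : Polynomial ℚ) ^ blockCount P := by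
  rw [PP, ← Finset.sum_filter_add_sum_filter_not (NCOn s) (fun P => ({m} : Finset ℕ) ∈ P),
    sum_single_block s m hm]

lemma Wsum (s : Finset ℕ) (m : ℕ) (hm : m ∈ s) :
    ∑ Q ∈ NCOn s, (X : Polynomial ℚ) ^ blockCount Q * (if ({m} : Finset ℕ) ∈ Q then X else 1)
      = PP s + (X - 1) * PP (s.erase m) := by
  rw [← Finset.sum_filter_add_sum_filter_not (NCOn s) (fun Q => ({m} : Finset ℕ) ∈ Q)]
  have h1 : ∑ Q ∈ (NCOn s).filter (fun Q => ({m} : Finset ℕ) ∈ Q),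
      (X : Polynomial ℚ) ^ blockCount Q * (if ({m} : Finset ℕ) ∈ Q then X else 1)
      = X * PP (s.erase m) := by
    rw [← sum_single_block s m hm, Finset.mul_sum]
    refine Finset.sum_congr rfl fun Q hQ => ?_
    rw [if_pos (Finset.mem_filter.1 hQ).2]; ring
  have h2 : ∑ Q ∈ (NCOn s).filter (fun Q => ({m} : Finset ℕ) ∉ Q),
      (X : Polynomial ℚ) ^ blockCount Q * (if ({m} : Finset ℕ) ∈ Q then X else 1)
      = ∑ Q ∈ (NCOn s).filter (fun Q => ({m} : Finset ℕ) ∉ Q), (X : Polynomial ℚ) ^ blockCount Q := by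
    refine Finset.sum_congr rfl fun Q hQ => ?_
    rw [if_neg (Finset.mem_filter.1 hQ).2]; ring
  rw [h1, h2, PP_split s m hm]
  ring

noncomputable def jv (P : Finset (Finset ℕ)) : ℕ :=
  if h : ((blk P 1).erase 1).Nonempty then ((blk P 1).erase 1).min' h else 1

lemma fwd_main (N : ℕ) (hN : 1 ≤ N) {P : Finset (Finset ℕ)}
    (hP : P ∈ NCOn (Finset.Icc 1 N)) (h1 : ({1} : Finset ℕ) ∉ P) :
    (2 ≤ jv P ∧ jv P ≤ N)
    ∧ P.filter (fun B => B ⊆ Finset.Icc 2 (jv P - 1)) ∈ NCOn (Finset.Icc 2 (jv P - 1))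
    ∧ insert ((blk P 1).erase 1) (P.filter (fun B => B ⊆ Finset.Icc (jv P) N))
        ∈ NCOn (Finset.Icc (jv P) N)
    ∧ blockCount P = blockCount (P.filter (fun B => B ⊆ Finset.Icc 2 (jv P - 1)))
        + blockCount (insert ((blk P 1).erase 1) (P.filter (fun B => B ⊆ Finset.Icc (jv P) N)))
        + (if ({jv P} : Finset ℕ) ∈
            insert ((blk P 1).erase 1) (P.filter (fun B => B ⊆ Finset.Icc (jv P) N))
           then 1 else 0)
    ∧ insert (blk P 1) ((P.filter (fun B => B ⊆ Finset.Icc 2 (jv P - 1)))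
        ∪ (P.filter (fun B => B ⊆ Finset.Icc (jv P) N))) = P
    ∧ blk (insert ((blk P 1).erase 1) (P.filter (fun B => B ⊆ Finset.Icc (jv P) N))) (jv P)
        = (blk P 1).erase 1
    ∧ ((blk P 1).erase 1) ∉ P.filter (fun B => B ⊆ Finset.Icc (jv P) N) := by
  obtain ⟨⟨hb, hc⟩, hnc⟩ := mem_NCOn.1 hP
  have hPart : IsPartOn (Finset.Icc 1 N) P := ⟨hb, hc⟩
  have h1N : (1 : ℕ) ∈ Finset.Icc 1 N := by rw [Finset.mem_Icc]; omega
  obtain ⟨hB₁P, h1B₁⟩ := blk_mem hPart h1N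
  set B₁ := blk P 1 with hB₁def
  have hne : (B₁.erase 1).Nonempty := by
    rcases Finset.eq_empty_or_nonempty (B₁.erase 1) with h | h
    · exfalso
      have hB₁1 : B₁ = {1} := by
        refine Finset.eq_singleton_iff_unique_mem.2 ⟨h1B₁, fun x hx => ?_⟩
        by_contra hx1
        exact absurd (h ▸ Finset.mem_erase.2 ⟨hx1, hx⟩) (Finset.notMem_empty x)
      exact h1 (hB₁1 ▸ hB₁P)
    · exact h
  have hjv : jv P = (B₁.erase 1).min' hne := by rw [jv, dif_pos hne]
  set j := jv P with hjdef
  have hjB₁ : j ∈ B₁.erase 1 := by rw [hjv]; exact Finset.min'_mem _ hne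
  have hj1 : j ≠ 1 := (Finset.mem_erase.1 hjB₁).1
  have hjB : j ∈ B₁ := (Finset.mem_erase.1 hjB₁).2
  have hjIcc : j ∈ Finset.Icc 1 N := (hb B₁ hB₁P).1 hjB
  have hj2 : 2 ≤ j := by rw [Finset.mem_Icc] at hjIcc; omega
  have hjN : j ≤ N := (Finset.mem_Icc.1 hjIcc).2
  have hmin : ∀ x ∈ B₁, x ≠ 1 → j ≤ x := by
    intro x hx hx1
    rw [hjv]
    exact Finset.min'_le _ x (Finset.mem_erase.2 ⟨hx1, hx⟩)
  have hmem1 : ∀ B ∈ P, (1 : ℕ) ∈ B → B = B₁ :=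
    fun B hB h1B => blocks_eq hPart hB hB₁P h1B h1B₁
  have hBelem : ∀ B ∈ P, B ≠ B₁ → ∀ x ∈ B, 2 ≤ x ∧ x ≤ N := by
    intro B hB hBne x hx
    have hxIcc : x ∈ Finset.Icc 1 N := (hb B hB).1 hx
    rw [Finset.mem_Icc] at hxIcc
    have hx1 : x ≠ 1 := fun h => hBne (hmem1 B hB (h ▸ hx))
    omega
  have hdich : ∀ B ∈ P, B ≠ B₁ →
      B ⊆ Finset.Icc 2 (j - 1) ∨ B ⊆ Finset.Icc j N := by
    intro B hB hBne
    by_cases hcase : ∀ x ∈ B, x ≤ j - 1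
    · left
      intro x hx
      rw [Finset.mem_Icc]
      exact ⟨(hBelem B hB hBne x hx).1, hcase x hx⟩
    · right
      push_neg at hcase
      obtain ⟨u, huB, hu⟩ := hcase
      have hujlt : j < u := by
        rcases Nat.lt_or_ge j u with h | h
        · exact h
        · have huj : j = u := by omega
          exact absurd (blocks_eq hPart hB hB₁P (huj ▸ huB) hjB) hBne
      intro v hvB
      rw [Finset.mem_Icc]
      have hv := hBelem B hB hBne v hvB
      refine ⟨?_, hv.2⟩
      by_contra hvj
      have hcross := hnc B₁ hB₁P B hB 1 v j u (by omega) (by omega) hujlt h1B₁ hjB hvB huB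
      exact hBne hcross.symm
  set P₁ := P.filter (fun B => B ⊆ Finset.Icc 2 (j - 1)) with hP₁def
  set Pf₂ := P.filter (fun B => B ⊆ Finset.Icc j N) with hPf₂def
  set P₂ := insert (B₁.erase 1) Pf₂ with hP₂def
  have hB₁notP₁ : B₁ ∉ P₁ := by
    intro h
    have := (Finset.mem_filter.1 h).2 h1B₁
    rw [Finset.mem_Icc] at this
    omega
  have hB₁notPf₂ : B₁ ∉ Pf₂ := by
    intro h
    have := (Finset.mem_filter.1 h).2 h1B₁
    rw [Finset.mem_Icc] at this
    omega
  have hEsub : B₁.erase 1 ⊆ Finset.Icc j N := by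
    intro x hx
    obtain ⟨hx1, hxB₁⟩ := Finset.mem_erase.1 hx
    rw [Finset.mem_Icc]
    have := (hb B₁ hB₁P).1 hxB₁
    rw [Finset.mem_Icc] at this
    exact ⟨hmin x hxB₁ hx1, this.2⟩
  have hEnotP : B₁.erase 1 ∉ P := by
    intro h
    have heq : B₁.erase 1 = B₁ :=
      blocks_eq hPart h hB₁P (Finset.mem_erase.2 ⟨hj1, hjB⟩) hjB
    have h1E : (1 : ℕ) ∈ B₁.erase 1 := by rw [heq]; exact h1B₁
    exact (Finset.mem_erase.1 h1E).1 rfl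
  have hEnotPf₂ : B₁.erase 1 ∉ Pf₂ := fun h => hEnotP (Finset.mem_filter.1 h).1
  have hP₁mem : P₁ ∈ NCOn (Finset.Icc 2 (j - 1)) := by
    refine mem_NCOn.2 ⟨⟨?_, ?_⟩, Noncrossing_subset (Finset.filter_subset _ _) hnc⟩
    · intro B hB
      exact ⟨(Finset.mem_filter.1 hB).2, (hb B (Finset.mem_filter.1 hB).1).2⟩
    · intro x hx
      rw [Finset.mem_Icc] at hx
      have hxIcc : x ∈ Finset.Icc 1 N := by rw [Finset.mem_Icc]; omega
      obtain ⟨B, ⟨hB, hxB⟩, -⟩ := hc x hxIcc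
      have hBne : B ≠ B₁ := by
        intro h
        have := hmin x (h ▸ hxB) (by omega)
        omega
      have hBsub : B ⊆ Finset.Icc 2 (j - 1) := by
        rcases hdich B hB hBne with h | h
        · exact h
        · exfalso
          have := h hxB
          rw [Finset.mem_Icc] at this
          omega
      refine ⟨B, ⟨Finset.mem_filter.2 ⟨hB, hBsub⟩, hxB⟩, ?_⟩
      rintro C ⟨hC, hxC⟩
      exact blocks_eq hPart (Finset.mem_filter.1 hC).1 hB hxC hxB
  have hP₂mem : P₂ ∈ NCOn (Finset.Icc j N) := by
    refine mem_NCOn.2 ⟨⟨?_, ?_⟩, ?_⟩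
    · intro B hB
      rcases Finset.mem_insert.1 hB with rfl | hB'
      · exact ⟨hEsub, ⟨j, hjB₁⟩⟩
      · exact ⟨(Finset.mem_filter.1 hB').2, (hb B (Finset.mem_filter.1 hB').1).2⟩
    · intro x hx
      rw [Finset.mem_Icc] at hx
      have hxIcc : x ∈ Finset.Icc 1 N := by rw [Finset.mem_Icc]; omega
      obtain ⟨B, ⟨hB, hxB⟩, -⟩ := hc x hxIcc
      by_cases hBB₁ : B = B₁
      · refine ⟨B₁.erase 1, ⟨Finset.mem_insert_self _ _,
          Finset.mem_erase.2 ⟨by omega, hBB₁ ▸ hxB⟩⟩, ?_⟩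
        rintro C ⟨hC, hxC⟩
        rcases Finset.mem_insert.1 hC with rfl | hC'
        · rfl
        · exfalso
          have hCP := (Finset.mem_filter.1 hC').1
          have hCeq : C = B₁ := blocks_eq hPart hCP hB₁P hxC (hBB₁ ▸ hxB)
          rw [hCeq] at hC'
          exact hB₁notPf₂ hC'
      · have hBsub : B ⊆ Finset.Icc j N := by
          rcases hdich B hB hBB₁ with h | h
          · exfalso
            have := h hxB
            rw [Finset.mem_Icc] at this
            omega
          · exact h
        refine ⟨B, ⟨Finset.mem_insert_of_mem (Finset.mem_filter.2 ⟨hB, hBsub⟩), hxB⟩, ?_⟩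
        rintro C ⟨hC, hxC⟩
        rcases Finset.mem_insert.1 hC with rfl | hC'
        · exfalso
          exact hBB₁ (blocks_eq hPart hB hB₁P hxB (Finset.mem_erase.1 hxC).2)
        · exact blocks_eq hPart (Finset.mem_filter.1 hC').1 hB hxC hxB
    · intro C₁ hC₁ C₂ hC₂ a b c e hab hbc hce ha hcc hbb he
      rcases Finset.mem_insert.1 hC₁ with h₁' | hC₁' <;>
        rcases Finset.mem_insert.1 hC₂ with h₂' | hC₂'
      · rw [h₁', h₂']
      · exfalso
        subst h₁'
        have haB₁ : a ∈ B₁ := (Finset.mem_erase.1 ha).2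
        have hcB₁ : c ∈ B₁ := (Finset.mem_erase.1 hcc).2
        have hC₂P := (Finset.mem_filter.1 hC₂').1
        have := hnc B₁ hB₁P C₂ hC₂P a b c e hab hbc hce haB₁ hcB₁ hbb he
        rw [← this] at hC₂'
        exact hB₁notPf₂ hC₂'
      · exfalso
        subst h₂'
        have hbB₁ : b ∈ B₁ := (Finset.mem_erase.1 hbb).2
        have heB₁ : e ∈ B₁ := (Finset.mem_erase.1 he).2
        have hC₁P := (Finset.mem_filter.1 hC₁').1
        have := hnc C₁ hC₁P B₁ hB₁P a b c e hab hbc hce ha hcc hbB₁ heB₁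
        rw [this] at hC₁'
        exact hB₁notPf₂ hC₁'
      · exact hnc C₁ (Finset.mem_filter.1 hC₁').1 C₂ (Finset.mem_filter.1 hC₂').1
          a b c e hab hbc hce ha hcc hbb he
  have hP₂part : IsPartOn (Finset.Icc j N) P₂ := (mem_NCOn.1 hP₂mem).1
  have hsingjPf₂ : ({j} : Finset ℕ) ∉ Pf₂ := by
    intro h
    have hjP := (Finset.mem_filter.1 h).1
    have heq : ({j} : Finset ℕ) = B₁ :=
      blocks_eq hPart hjP hB₁P (Finset.mem_singleton_self j) hjB
    have : (1 : ℕ) ∈ ({j} : Finset ℕ) := by rw [heq]; exact h1B₁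
    exact hj1 (Finset.mem_singleton.1 this).symm
  have hjmemP₂ : (({j} : Finset ℕ) ∈ P₂) ↔ B₁.erase 1 = {j} := by
    constructor
    · intro h
      rcases Finset.mem_insert.1 h with h' | h'
      · exact h'.symm
      · exact absurd h' hsingjPf₂
    · intro h
      rw [hP₂def, h]
      exact Finset.mem_insert_self _ _
  have hdecomp : insert B₁ (P₁ ∪ Pf₂) = P := by
    ext B
    simp only [Finset.mem_insert, Finset.mem_union]
    constructor
    · rintro (rfl | hB | hB)
      · exact hB₁P
      · exact (Finset.mem_filter.1 hB).1
      · exact (Finset.mem_filter.1 hB).1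
    · intro hB
      by_cases hBB₁ : B = B₁
      · exact Or.inl hBB₁
      · rcases hdich B hB hBB₁ with h | h
        · exact Or.inr (Or.inl (Finset.mem_filter.2 ⟨hB, h⟩))
        · exact Or.inr (Or.inr (Finset.mem_filter.2 ⟨hB, h⟩))
  have hdisj : Disjoint P₁ Pf₂ := by
    rw [Finset.disjoint_left]
    intro B hB hB'
    obtain ⟨x, hx⟩ := (hb B (Finset.mem_filter.1 hB).1).2
    have h1' := (Finset.mem_filter.1 hB).2 hx
    have h2' := (Finset.mem_filter.1 hB').2 hx
    rw [Finset.mem_Icc] at h1' h2'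
    omega
  have hcardB₁ : 2 ≤ B₁.card := by
    have hsub : ({1, j} : Finset ℕ) ⊆ B₁ :=
      Finset.insert_subset_iff.2 ⟨h1B₁, Finset.singleton_subset_iff.2 hjB⟩
    have h2 : ({1, j} : Finset ℕ).card = 2 := by
      rw [Finset.card_insert_of_notMem (fun h => hj1 (Finset.mem_singleton.1 h).symm),
        Finset.card_singleton]
    have := Finset.card_le_card hsub
    omega
  have hbcP : blockCount P = 1 + blockCount P₁ + blockCount Pf₂ := by
    conv_lhs => rw [← hdecomp]
    rw [blockCount, Finset.filter_insert, if_pos hcardB₁, Finset.filter_union,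
      Finset.card_insert_of_notMem (by
        simp only [Finset.mem_union]
        rintro (h | h)
        · exact hB₁notP₁ (Finset.filter_subset _ _ h)
        · exact hB₁notPf₂ (Finset.filter_subset _ _ h)),
      Finset.card_union_of_disjoint (Finset.disjoint_filter_filter hdisj)]
    simp only [blockCount]
    omega
  have hbcfinal : blockCount P = blockCount P₁ + blockCount P₂
      + (if ({j} : Finset ℕ) ∈ P₂ then 1 else 0) := by
    by_cases hEj : B₁.erase 1 = {j}
    · have hcard1 : ¬ 2 ≤ (B₁.erase 1).card := by rw [hEj, Finset.card_singleton]; omega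
      have hbcP₂ : blockCount P₂ = blockCount Pf₂ := by
        rw [hP₂def, blockCount, Finset.filter_insert, if_neg hcard1, blockCount]
      rw [hbcP, hbcP₂, if_pos (hjmemP₂.2 hEj)]
      omega
    · have hcard2 : 2 ≤ (B₁.erase 1).card := by
        have h0 : (B₁.erase 1).card ≠ 0 := Finset.card_ne_zero_of_mem hjB₁
        have h1' : (B₁.erase 1).card ≠ 1 := by
          intro h
          obtain ⟨a, ha⟩ := Finset.card_eq_one.1 h
          have hja : j = a := Finset.mem_singleton.1 (ha ▸ hjB₁)
          exact hEj (by rw [ha, hja])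
        omega
      have hbcP₂ : blockCount P₂ = 1 + blockCount Pf₂ := by
        rw [hP₂def, blockCount, Finset.filter_insert, if_pos hcard2,
          Finset.card_insert_of_notMem (fun h => hEnotPf₂ (Finset.filter_subset _ _ h))]
        simp only [blockCount]
        omega
      rw [hbcP, hbcP₂, if_neg (fun h => hEj (hjmemP₂.1 h))]
      omega
  have hblkP₂ : blk P₂ j = B₁.erase 1 :=
    blk_eq hP₂part (Finset.mem_insert_self _ _) hjB₁
  exact ⟨⟨hj2, hjN⟩, hP₁mem, hP₂mem, hbcfinal, hdecomp, hblkP₂, hEnotPf₂⟩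

lemma bwd_main (N j : ℕ) (hj2 : 2 ≤ j) (hjN : j ≤ N)
    {P₁ P₂ : Finset (Finset ℕ)}
    (h₁ : P₁ ∈ NCOn (Finset.Icc 2 (j - 1))) (h₂ : P₂ ∈ NCOn (Finset.Icc j N)) :
    insert (insert 1 (blk P₂ j)) (P₁ ∪ P₂.erase (blk P₂ j)) ∈ NCOn (Finset.Icc 1 N)
    ∧ ({1} : Finset ℕ) ∉ insert (insert 1 (blk P₂ j)) (P₁ ∪ P₂.erase (blk P₂ j))
    ∧ blk (insert (insert 1 (blk P₂ j)) (P₁ ∪ P₂.erase (blk P₂ j))) 1 = insert 1 (blk P₂ j)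
    ∧ jv (insert (insert 1 (blk P₂ j)) (P₁ ∪ P₂.erase (blk P₂ j))) = j
    ∧ (insert (insert 1 (blk P₂ j)) (P₁ ∪ P₂.erase (blk P₂ j))).filter
        (fun B => B ⊆ Finset.Icc 2 (j - 1)) = P₁
    ∧ (insert (insert 1 (blk P₂ j)) (P₁ ∪ P₂.erase (blk P₂ j))).filter
        (fun B => B ⊆ Finset.Icc j N) = P₂.erase (blk P₂ j) := by
  obtain ⟨⟨hb₁, hc₁⟩, hnc₁⟩ := mem_NCOn.1 h₁
  obtain ⟨⟨hb₂, hc₂⟩, hnc₂⟩ := mem_NCOn.1 h₂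
  have hPart₁ : IsPartOn (Finset.Icc 2 (j - 1)) P₁ := ⟨hb₁, hc₁⟩
  have hPart₂ : IsPartOn (Finset.Icc j N) P₂ := ⟨hb₂, hc₂⟩
  have hjIcc : j ∈ Finset.Icc j N := by rw [Finset.mem_Icc]; omega
  obtain ⟨hBjP₂, hjBj⟩ := blk_mem hPart₂ hjIcc
  set Bj := blk P₂ j with hBjdef
  have hBjsub : Bj ⊆ Finset.Icc j N := (hb₂ Bj hBjP₂).1
  have h1Bj : (1 : ℕ) ∉ Bj := by
    intro h
    have := hBjsub h
    rw [Finset.mem_Icc] at this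
    omega
  set B₀ : Finset ℕ := insert 1 Bj with hB₀def
  set P : Finset (Finset ℕ) := insert B₀ (P₁ ∪ P₂.erase Bj) with hPdef
  have hP₁elem : ∀ B ∈ P₁, ∀ x ∈ B, 2 ≤ x ∧ x ≤ j - 1 := by
    intro B hB x hx
    have := (hb₁ B hB).1 hx
    rw [Finset.mem_Icc] at this
    exact this
  have hP₂elem : ∀ B ∈ P₂, ∀ x ∈ B, j ≤ x ∧ x ≤ N := by
    intro B hB x hx
    have := (hb₂ B hB).1 hx
    rw [Finset.mem_Icc] at this
    exact this
  have hPartP : IsPartOn (Finset.Icc 1 N) P := by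
    constructor
    · intro B hB
      rcases Finset.mem_insert.1 hB with rfl | hB'
      · refine ⟨?_, ⟨1, Finset.mem_insert_self _ _⟩⟩
        intro x hx
        rw [Finset.mem_Icc]
        rcases Finset.mem_insert.1 hx with rfl | hx'
        · omega
        · have := hP₂elem Bj hBjP₂ x hx'
          omega
      · rcases Finset.mem_union.1 hB' with hB'' | hB''
        · refine ⟨?_, (hb₁ B hB'').2⟩
          intro x hx
          rw [Finset.mem_Icc]
          have := hP₁elem B hB'' x hx
          omega
        · have hBP₂ := Finset.mem_of_mem_erase hB''
          refine ⟨?_, (hb₂ B hBP₂).2⟩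
          intro x hx
          rw [Finset.mem_Icc]
          have := hP₂elem B hBP₂ x hx
          omega
    · intro x hx
      rw [Finset.mem_Icc] at hx
      rcases Nat.lt_or_ge x 2 with hx1 | hx2
      · have hx1' : x = 1 := by omega
        subst hx1'
        refine ⟨B₀, ⟨Finset.mem_insert_self _ _, Finset.mem_insert_self _ _⟩, ?_⟩
        rintro C ⟨hC, hxC⟩
        rcases Finset.mem_insert.1 hC with rfl | hC'
        · rfl
        · exfalso
          rcases Finset.mem_union.1 hC' with hC'' | hC''
          · have := hP₁elem C hC'' 1 hxC
            omega
          · have := hP₂elem C (Finset.mem_of_mem_erase hC'') 1 hxC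
            omega
      · rcases Nat.lt_or_ge x j with hxj | hxj
        · -- 2 ≤ x ≤ j - 1
          have hxIcc : x ∈ Finset.Icc 2 (j - 1) := by rw [Finset.mem_Icc]; omega
          obtain ⟨B, ⟨hB, hxB⟩, -⟩ := hc₁ x hxIcc
          refine ⟨B, ⟨Finset.mem_insert_of_mem (Finset.mem_union_left _ hB), hxB⟩, ?_⟩
          rintro C ⟨hC, hxC⟩
          rcases Finset.mem_insert.1 hC with rfl | hC'
          · exfalso
            rcases Finset.mem_insert.1 hxC with h | h
            · omega
            · have := hP₂elem Bj hBjP₂ x h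
              omega
          · rcases Finset.mem_union.1 hC' with hC'' | hC''
            · exact blocks_eq hPart₁ hC'' hB hxC hxB
            · exfalso
              have := hP₂elem C (Finset.mem_of_mem_erase hC'') x hxC
              omega
        · -- j ≤ x ≤ N
          have hxIcc : x ∈ Finset.Icc j N := by rw [Finset.mem_Icc]; omega
          obtain ⟨B, ⟨hB, hxB⟩, -⟩ := hc₂ x hxIcc
          by_cases hBBj : B = Bj
          · subst hBBj
            refine ⟨B₀, ⟨Finset.mem_insert_self _ _, Finset.mem_insert_of_mem hxB⟩, ?_⟩
            rintro C ⟨hC, hxC⟩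
            rcases Finset.mem_insert.1 hC with rfl | hC'
            · rfl
            · exfalso
              rcases Finset.mem_union.1 hC' with hC'' | hC''
              · have := hP₁elem C hC'' x hxC
                omega
              · have hCeq : C = Bj := blocks_eq hPart₂ (Finset.mem_of_mem_erase hC'') hB hxC hxB
                rw [hCeq] at hC''
                exact (Finset.mem_erase.1 hC'').1 rfl
          · refine ⟨B, ⟨Finset.mem_insert_of_mem
              (Finset.mem_union_right _ (Finset.mem_erase.2 ⟨hBBj, hB⟩)), hxB⟩, ?_⟩
            rintro C ⟨hC, hxC⟩
            rcases Finset.mem_insert.1 hC with rfl | hC'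
            · exfalso
              have hxBj : x ∈ Bj := by
                rcases Finset.mem_insert.1 hxC with h | h
                · omega
                · exact h
              exact hBBj (blocks_eq hPart₂ hB hBjP₂ hxB hxBj)
            · rcases Finset.mem_union.1 hC' with hC'' | hC''
              · exfalso
                have := hP₁elem C hC'' x hxC
                omega
              · exact blocks_eq hPart₂ (Finset.mem_of_mem_erase hC'') hB hxC hxB
  have hncP : Noncrossing P := by
    intro C₁ hC₁ C₂ hC₂ a b c e hab hbc hce ha hcc hbb he
    rcases Finset.mem_insert.1 hC₁ with h₁' | hC₁' <;>
      rcases Finset.mem_insert.1 hC₂ with h₂' | hC₂'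
    · rw [h₁', h₂']
    · exfalso
      subst h₁'
      rcases Finset.mem_union.1 hC₂' with hC'' | hC''
      · -- C₂ ∈ P₁ : b,e ∈ [2, j-1]; c ∈ B₀
        have hbel := hP₁elem C₂ hC'' b hbb
        have heel := hP₁elem C₂ hC'' e he
        rcases Finset.mem_insert.1 hcc with h | h
        · omega
        · have := hP₂elem Bj hBjP₂ c h
          omega
      · -- C₂ ∈ P₂.erase Bj
        have hC₂P₂ := Finset.mem_of_mem_erase hC''
        have hbel := hP₂elem C₂ hC₂P₂ b hbb
        have heel := hP₂elem C₂ hC₂P₂ e he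
        have hcBj : c ∈ Bj := by
          rcases Finset.mem_insert.1 hcc with h | h
          · omega
          · exact h
        have hbj : j < b := by
          rcases Nat.lt_or_ge j b with h | h
          · exact h
          · exfalso
            have hbj' : b = j := by omega
            have := blocks_eq hPart₂ hC₂P₂ hBjP₂ (hbj' ▸ hbb) hjBj
            rw [this] at hC''
            exact (Finset.mem_erase.1 hC'').1 rfl
        have := hnc₂ Bj hBjP₂ C₂ hC₂P₂ j b c e hbj hbc hce hjBj hcBj hbb he
        rw [← this] at hC''
        exact (Finset.mem_erase.1 hC'').1 rfl
    · exfalso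
      subst h₂'
      rcases Finset.mem_union.1 hC₁' with hC'' | hC''
      · -- C₁ ∈ P₁ : a,c ∈ [2,j-1]; b ∈ B₀, b > a ≥ 2
        have hael := hP₁elem C₁ hC'' a ha
        have hcel := hP₁elem C₁ hC'' c hcc
        rcases Finset.mem_insert.1 hbb with h | h
        · omega
        · have := hP₂elem Bj hBjP₂ b h
          omega
      · -- C₁ ∈ P₂.erase Bj: a,c ∈ [j,N]; b,e ∈ B₀ with b,e ≥ 2 so in Bj
        have hC₁P₂ := Finset.mem_of_mem_erase hC''
        have hael := hP₂elem C₁ hC₁P₂ a ha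
        have hcel := hP₂elem C₁ hC₁P₂ c hcc
        have hbBj : b ∈ Bj := by
          rcases Finset.mem_insert.1 hbb with h | h
          · omega
          · exact h
        have heBj : e ∈ Bj := by
          rcases Finset.mem_insert.1 he with h | h
          · omega
          · exact h
        have := hnc₂ C₁ hC₁P₂ Bj hBjP₂ a b c e hab hbc hce ha hcc hbBj heBj
        rw [this] at hC''
        exact (Finset.mem_erase.1 hC'').1 rfl
    · rcases Finset.mem_union.1 hC₁' with h₁'' | h₁'' <;>
        rcases Finset.mem_union.1 hC₂' with h₂'' | h₂''
      · exact hnc₁ C₁ h₁'' C₂ h₂'' a b c e hab hbc hce ha hcc hbb he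
      · exfalso
        have hcel := hP₁elem C₁ h₁'' c hcc
        have hbel := hP₂elem C₂ (Finset.mem_of_mem_erase h₂'') b hbb
        omega
      · exfalso
        have hael := hP₂elem C₁ (Finset.mem_of_mem_erase h₁'') a ha
        have hbel := hP₁elem C₂ h₂'' b hbb
        omega
      · exact hnc₂ C₁ (Finset.mem_of_mem_erase h₁'') C₂ (Finset.mem_of_mem_erase h₂'')
          a b c e hab hbc hce ha hcc hbb he
  have hPmem : P ∈ NCOn (Finset.Icc 1 N) := mem_NCOn.2 ⟨hPartP, hncP⟩
  have h1P : ({1} : Finset ℕ) ∉ P := by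
    intro h
    rcases Finset.mem_insert.1 h with h' | h'
    · have : j ∈ ({1} : Finset ℕ) := by rw [h']; exact Finset.mem_insert_of_mem hjBj
      rw [Finset.mem_singleton] at this
      omega
    · rcases Finset.mem_union.1 h' with h'' | h''
      · have := hP₁elem _ h'' 1 (Finset.mem_singleton_self 1)
        omega
      · have := hP₂elem _ (Finset.mem_of_mem_erase h'') 1 (Finset.mem_singleton_self 1)
        omega
  have hblk1 : blk P 1 = B₀ :=
    blk_eq hPartP (Finset.mem_insert_self _ _) (Finset.mem_insert_self _ _)
  have hB₀erase : B₀.erase 1 = Bj := Finset.erase_insert h1Bj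
  have hjvP : jv P = j := by
    rw [jv, hblk1, hB₀erase, dif_pos ⟨j, hjBj⟩]
    refine le_antisymm (Finset.min'_le _ j hjBj) (Finset.le_min' _ _ _ ?_)
    intro y hy
    exact (hP₂elem Bj hBjP₂ y hy).1
  have hfilter₁ : P.filter (fun B => B ⊆ Finset.Icc 2 (j - 1)) = P₁ := by
    ext B
    rw [Finset.mem_filter]
    constructor
    · rintro ⟨hB, hBsub⟩
      rcases Finset.mem_insert.1 hB with rfl | hB'
      · exfalso
        have := hBsub (Finset.mem_insert_self 1 Bj)
        rw [Finset.mem_Icc] at this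
        omega
      · rcases Finset.mem_union.1 hB' with h | h
        · exact h
        · exfalso
          obtain ⟨x, hx⟩ := (hb₂ B (Finset.mem_of_mem_erase h)).2
          have h1' := hP₂elem B (Finset.mem_of_mem_erase h) x hx
          have h2' := hBsub hx
          rw [Finset.mem_Icc] at h2'
          omega
    · intro hB
      exact ⟨Finset.mem_insert_of_mem (Finset.mem_union_left _ hB), (hb₁ B hB).1⟩
  have hfilter₂ : P.filter (fun B => B ⊆ Finset.Icc j N) = P₂.erase Bj := by
    ext B
    rw [Finset.mem_filter]
    constructor
    · rintro ⟨hB, hBsub⟩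
      rcases Finset.mem_insert.1 hB with rfl | hB'
      · exfalso
        have := hBsub (Finset.mem_insert_self 1 Bj)
        rw [Finset.mem_Icc] at this
        omega
      · rcases Finset.mem_union.1 hB' with h | h
        · exfalso
          obtain ⟨x, hx⟩ := (hb₁ B h).2
          have h1' := hP₁elem B h x hx
          have h2' := hBsub hx
          rw [Finset.mem_Icc] at h2'
          omega
        · exact h
    · intro hB
      exact ⟨Finset.mem_insert_of_mem (Finset.mem_union_right _ hB),
        (hb₂ B (Finset.mem_of_mem_erase hB)).1⟩
  exact ⟨hPmem, h1P, hblk1, hjvP, hfilter₁, hfilter₂⟩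

lemma main_split (N : ℕ) (hN : 1 ≤ N) :
    ∑ P ∈ (NCOn (Finset.Icc 1 N)).filter (fun P => ({1} : Finset ℕ) ∉ P),
      (X : Polynomial ℚ) ^ blockCount P
    = ∑ j ∈ Finset.Icc 2 N, PP (Finset.Icc 2 (j - 1)) *
        (∑ Q ∈ NCOn (Finset.Icc j N), (X : Polynomial ℚ) ^ blockCount Q *
          (if ({j} : Finset ℕ) ∈ Q then X else 1)) := by
  have hstep : ∀ j : ℕ, PP (Finset.Icc 2 (j - 1)) *
      (∑ Q ∈ NCOn (Finset.Icc j N), (X : Polynomial ℚ) ^ blockCount Q *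
        (if ({j} : Finset ℕ) ∈ Q then X else 1))
      = ∑ pq ∈ NCOn (Finset.Icc 2 (j - 1)) ×ˢ NCOn (Finset.Icc j N),
          (X : Polynomial ℚ) ^ blockCount pq.1 * ((X : Polynomial ℚ) ^ blockCount pq.2 *
            (if ({j} : Finset ℕ) ∈ pq.2 then X else 1)) := by
    intro j
    rw [PP, Finset.sum_mul_sum, Finset.sum_product]
  simp only [hstep]
  rw [Finset.sum_sigma' (Finset.Icc 2 N)
    (fun j => NCOn (Finset.Icc 2 (j - 1)) ×ˢ NCOn (Finset.Icc j N))
    (fun j pq => (X : Polynomial ℚ) ^ blockCount pq.1 *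
      ((X : Polynomial ℚ) ^ blockCount pq.2 * (if ({j} : Finset ℕ) ∈ pq.2 then X else 1)))]
  refine Finset.sum_nbij'
    (fun P => (⟨jv P, (P.filter (fun B => B ⊆ Finset.Icc 2 (jv P - 1)),
      insert ((blk P 1).erase 1) (P.filter (fun B => B ⊆ Finset.Icc (jv P) N)))⟩ :
        Σ _ : ℕ, Finset (Finset ℕ) × Finset (Finset ℕ)))
    (fun x => insert (insert 1 (blk x.2.2 x.1)) (x.2.1 ∪ x.2.2.erase (blk x.2.2 x.1)))
    ?_ ?_ ?_ ?_ ?_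
  · intro P hP
    obtain ⟨hP', h1'⟩ := Finset.mem_filter.1 hP
    obtain ⟨⟨hj2, hjN⟩, hm1, hm2, -, -, -, -⟩ := fwd_main N hN hP' h1'
    rw [Finset.mem_sigma, Finset.mem_product]
    exact ⟨by rw [Finset.mem_Icc]; exact ⟨hj2, hjN⟩, hm1, hm2⟩
  · intro x hx
    rw [Finset.mem_sigma, Finset.mem_product] at hx
    obtain ⟨hj, h1, h2⟩ := hx
    rw [Finset.mem_Icc] at hj
    obtain ⟨hmem, h1P, -, -, -, -⟩ := bwd_main N x.1 hj.1 hj.2 h1 h2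
    exact Finset.mem_filter.2 ⟨hmem, h1P⟩
  · intro P hP
    obtain ⟨hP', h1'⟩ := Finset.mem_filter.1 hP
    obtain ⟨⟨hj2, hjN⟩, hm1, hm2, -, hdecomp, hblk, hEnot⟩ := fwd_main N hN hP' h1'
    simp only
    rw [hblk]
    have h1B : (1 : ℕ) ∈ blk P 1 := by
      have h1N : (1 : ℕ) ∈ Finset.Icc 1 N := by rw [Finset.mem_Icc]; omega
      exact (blk_mem (mem_NCOn.1 hP').1 h1N).2
    rw [Finset.insert_erase h1B, Finset.erase_insert hEnot]
    exact hdecomp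
  · intro x hx
    rw [Finset.mem_sigma, Finset.mem_product] at hx
    obtain ⟨hj, h1, h2⟩ := hx
    rw [Finset.mem_Icc] at hj
    obtain ⟨hmem, h1P, hblk1, hjvP, hfil₁, hfil₂⟩ := bwd_main N x.1 hj.1 hj.2 h1 h2
    have hjIcc : x.1 ∈ Finset.Icc x.1 N := by rw [Finset.mem_Icc]; omega
    obtain ⟨hBjP₂, hjBj⟩ := blk_mem (mem_NCOn.1 h2).1 hjIcc
    have h1Bj : (1 : ℕ) ∉ blk x.2.2 x.1 := by
      intro h
      have := ((mem_NCOn.1 h2).1.1 _ hBjP₂).1 h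
      rw [Finset.mem_Icc] at this
      omega
    obtain ⟨j₀, P₁, P₂⟩ := x
    simp only at hjvP hfil₁ hfil₂ hblk1 hjBj hBjP₂ h1Bj ⊢
    rw [hjvP, hblk1, hfil₁, hfil₂, Finset.erase_insert h1Bj, Finset.insert_erase hBjP₂]
  · intro P hP
    obtain ⟨hP', h1'⟩ := Finset.mem_filter.1 hP
    obtain ⟨-, -, -, hbc, -, -, -⟩ := fwd_main N hN hP' h1'
    simp only
    rw [hbc]
    by_cases hQ : ({jv P} : Finset ℕ) ∈
        insert ((blk P 1).erase 1) (P.filter (fun B => B ⊆ Finset.Icc (jv P) N))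
    · rw [if_pos hQ, if_pos hQ]
      ring
    · rw [if_neg hQ, if_neg hQ]
      ring

lemma PP_rec (n : ℕ) :
    PP (Finset.Icc 1 (n + 1)) =
      (∑ a ∈ Finset.range (n + 1), PP (Finset.Icc 1 a) * PP (Finset.Icc 1 (n - a)))
      + (X - 1) * ∑ a ∈ Finset.range n, PP (Finset.Icc 1 a) * PP (Finset.Icc 1 (n - 1 - a)) := by
  have h1mem : (1 : ℕ) ∈ Finset.Icc 1 (n + 1) := by rw [Finset.mem_Icc]; omega
  have herase1 : (Finset.Icc 1 (n + 1)).erase 1 = Finset.Icc 2 (n + 1) := by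
    rw [Finset.Icc_erase_left]
    exact (Finset.Icc_add_one_left_eq_Ioc 1 (n + 1)).symm
  rw [PP_split (Finset.Icc 1 (n + 1)) 1 h1mem, main_split (n + 1) (by omega), herase1]
  have hsum : ∑ j ∈ Finset.Icc 2 (n + 1), PP (Finset.Icc 2 (j - 1)) *
      (∑ Q ∈ NCOn (Finset.Icc j (n + 1)), (X : Polynomial ℚ) ^ blockCount Q *
        (if ({j} : Finset ℕ) ∈ Q then X else 1))
      = ∑ a ∈ Finset.range n, PP (Finset.Icc 1 a) *
          (PP (Finset.Icc 1 (n - a)) + (X - 1) * PP (Finset.Icc 1 (n - 1 - a))) := by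
    have hIcoIcc : Finset.Icc 2 (n + 1) = Finset.Ico 2 (n + 2) := by
      exact (Finset.Ico_add_one_right_eq_Icc 2 (n + 1)).symm
    rw [hIcoIcc, Finset.sum_Ico_eq_sum_range]
    have hn2 : n + 2 - 2 = n := by omega
    rw [hn2]
    refine Finset.sum_congr rfl fun a ha => ?_
    rw [Finset.mem_range] at ha
    have hjmem : (2 + a : ℕ) ∈ Finset.Icc (2 + a) (n + 1) := by rw [Finset.mem_Icc]; omega
    rw [Wsum (Finset.Icc (2 + a) (n + 1)) (2 + a) hjmem]
    have herasej : (Finset.Icc (2 + a) (n + 1)).erase (2 + a)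
        = Finset.Icc (2 + a + 1) (n + 1) := by
      rw [Finset.Icc_erase_left]
      exact (Finset.Icc_add_one_left_eq_Ioc _ _).symm
    rw [herasej, PP_Icc_eq 2 (2 + a - 1) (by omega), PP_Icc_eq (2 + a) (n + 1) (by omega),
      PP_Icc_eq (2 + a + 1) (n + 1) (by omega)]
    have e1 : 2 + a - 1 + 1 - 2 = a := by omega
    have e2 : n + 1 + 1 - (2 + a) = n - a := by omega
    have e3 : n + 1 + 1 - (2 + a + 1) = n - 1 - a := by omega
    rw [e1, e2, e3]
  rw [hsum, PP_Icc_eq 2 (n + 1) (by omega)]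
  have e4 : n + 1 + 1 - 2 = n := by omega
  rw [e4, Finset.sum_range_succ]
  have e5 : PP (Finset.Icc 1 (n - n)) = 1 := by
    have : n - n = 0 := by omega
    rw [this, Finset.Icc_eq_empty (by omega), PP_empty]
  rw [e5, mul_one]
  have hcomm : ∑ a ∈ Finset.range n, PP (Finset.Icc 1 a) *
      (PP (Finset.Icc 1 (n - a)) + (X - 1) * PP (Finset.Icc 1 (n - 1 - a)))
      = (∑ a ∈ Finset.range n, PP (Finset.Icc 1 a) * PP (Finset.Icc 1 (n - a)))
        + (X - 1) * ∑ a ∈ Finset.range n, PP (Finset.Icc 1 a) * PP (Finset.Icc 1 (n - 1 - a)) := by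
    rw [Finset.mul_sum, ← Finset.sum_add_distrib]
    exact Finset.sum_congr rfl fun a _ => by ring
  rw [hcomm]
  ring

def cnm (n m : ℕ) : ℕ := catalan (n - m) * (n - m).choose m

noncomputable def Gx (n : ℕ) : Polynomial ℚ :=
  ∑ m ∈ Finset.range (n + 1), C ((cnm n m : ℕ) : ℚ) * X ^ m

lemma cnm_eq_zero {n m : ℕ} (h : n < 2 * m) : cnm n m = 0 := by
  rw [cnm, Nat.choose_eq_zero_of_lt (by omega), mul_zero]

lemma Gx_coeff (n k : ℕ) : (Gx n).coeff k = ((cnm n k : ℕ) : ℚ) := by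
  rw [Gx, Polynomial.finset_sum_coeff]
  simp only [Polynomial.coeff_C_mul, Polynomial.coeff_X_pow, mul_ite, mul_one, mul_zero]
  rw [Finset.sum_ite_eq (Finset.range (n + 1)) k (fun m => ((cnm n m : ℕ) : ℚ))]
  by_cases h : k ∈ Finset.range (n + 1)
  · rw [if_pos h]
  · rw [if_neg h]
    rw [Finset.mem_range] at h
    rw [cnm_eq_zero (by omega), Nat.cast_zero]

lemma conv_zero (Nn K : ℕ) (h : Nn < K) :
    ∑ ab ∈ Finset.HasAntidiagonal.antidiagonal Nn, ∑ ij ∈ Finset.HasAntidiagonal.antidiagonal K,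
      cnm ab.1 ij.1 * cnm ab.2 ij.2 = 0 := by
  refine Finset.sum_eq_zero fun ab hab => Finset.sum_eq_zero fun ij hij => ?_
  rw [Finset.HasAntidiagonal.mem_antidiagonal] at hab hij
  by_cases h1 : ij.1 ≤ ab.1
  · rw [cnm_eq_zero (n := ab.2) (m := ij.2) (by omega), mul_zero]
  · rw [cnm_eq_zero (n := ab.1) (m := ij.1) (by omega), zero_mul]

lemma conv_nat (Nn K : ℕ) (h : K ≤ Nn) :
    ∑ ab ∈ Finset.HasAntidiagonal.antidiagonal Nn, ∑ ij ∈ Finset.HasAntidiagonal.antidiagonal K,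
      cnm ab.1 ij.1 * cnm ab.2 ij.2
    = catalan (Nn - K + 1) * (Nn - K).choose K := by
  rw [Finset.sum_comm]
  have step2 : ∀ ij ∈ Finset.HasAntidiagonal.antidiagonal K,
      ∑ ab ∈ Finset.HasAntidiagonal.antidiagonal Nn, cnm ab.1 ij.1 * cnm ab.2 ij.2
      = ∑ pq ∈ Finset.HasAntidiagonal.antidiagonal (Nn - K),
          (catalan pq.1 * pq.1.choose ij.1) * (catalan pq.2 * pq.2.choose ij.2) := by
    intro ij hij
    rw [Finset.HasAntidiagonal.mem_antidiagonal] at hij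
    rw [← Finset.sum_filter_add_sum_filter_not (Finset.HasAntidiagonal.antidiagonal Nn)
      (fun ab => ij.1 ≤ ab.1 ∧ ij.2 ≤ ab.2)]
    have hz : ∑ ab ∈ (Finset.HasAntidiagonal.antidiagonal Nn).filter
        (fun ab => ¬(ij.1 ≤ ab.1 ∧ ij.2 ≤ ab.2)), cnm ab.1 ij.1 * cnm ab.2 ij.2 = 0 := by
      refine Finset.sum_eq_zero fun ab hab => ?_
      obtain ⟨hab', hneg⟩ := Finset.mem_filter.1 hab
      rw [Finset.HasAntidiagonal.mem_antidiagonal] at hab'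
      by_cases h1 : ij.1 ≤ ab.1
      · rw [cnm_eq_zero (n := ab.2) (m := ij.2) (by omega), mul_zero]
      · rw [cnm_eq_zero (n := ab.1) (m := ij.1) (by omega), zero_mul]
    rw [hz, add_zero]
    refine Finset.sum_nbij' (fun ab => (ab.1 - ij.1, ab.2 - ij.2))
      (fun pq => (pq.1 + ij.1, pq.2 + ij.2)) ?_ ?_ ?_ ?_ ?_
    · intro ab hab
      obtain ⟨hab', hpos⟩ := Finset.mem_filter.1 hab
      rw [Finset.HasAntidiagonal.mem_antidiagonal] at hab'
      dsimp -failIfUnchanged only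
      rw [Finset.HasAntidiagonal.mem_antidiagonal]
      omega
    · intro pq hpq
      rw [Finset.HasAntidiagonal.mem_antidiagonal] at hpq
      dsimp -failIfUnchanged only
      refine Finset.mem_filter.2 ⟨?_, ?_⟩
      · rw [Finset.HasAntidiagonal.mem_antidiagonal]
        dsimp -failIfUnchanged only
        omega
      · dsimp only
        omega
    · intro ab hab
      obtain ⟨-, hpos⟩ := Finset.mem_filter.1 hab
      dsimp -failIfUnchanged only
      rw [Prod.ext_iff]
      dsimp -failIfUnchanged only
      constructor <;> omega
    · intro pq hpq
      dsimp -failIfUnchanged only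
      rw [Prod.ext_iff]
      dsimp -failIfUnchanged only
      constructor <;> omega
    · intro ab hab
      obtain ⟨-, hpos⟩ := Finset.mem_filter.1 hab
      dsimp -failIfUnchanged only
      simp [cnm]
  rw [Finset.sum_congr rfl step2, Finset.sum_comm]
  have step3 : ∀ pq ∈ Finset.HasAntidiagonal.antidiagonal (Nn - K),
      ∑ ij ∈ Finset.HasAntidiagonal.antidiagonal K,
        (catalan pq.1 * pq.1.choose ij.1) * (catalan pq.2 * pq.2.choose ij.2)
      = catalan pq.1 * catalan pq.2 * (Nn - K).choose K := by
    intro pq hpq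
    rw [Finset.HasAntidiagonal.mem_antidiagonal] at hpq
    have hre : ∀ ij : ℕ × ℕ, (catalan pq.1 * pq.1.choose ij.1) *
        (catalan pq.2 * pq.2.choose ij.2)
        = (catalan pq.1 * catalan pq.2) * (pq.1.choose ij.1 * pq.2.choose ij.2) :=
      fun ij => by ring
    rw [Finset.sum_congr rfl (fun ij _ => hre ij), ← Finset.mul_sum, ← Nat.add_choose_eq, hpq]
  rw [Finset.sum_congr rfl step3, ← Finset.sum_mul, ← catalan_succ']

lemma Gx_rec (n : ℕ) :
    Gx (n + 2) = (∑ ab ∈ Finset.HasAntidiagonal.antidiagonal (n + 1), Gx ab.1 * Gx ab.2)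
      + X * ∑ ab ∈ Finset.HasAntidiagonal.antidiagonal n, Gx ab.1 * Gx ab.2 := by
  have hS : ∀ (M k : ℕ), (∑ ab ∈ Finset.HasAntidiagonal.antidiagonal M, Gx ab.1 * Gx ab.2).coeff k
      = ((∑ ab ∈ Finset.HasAntidiagonal.antidiagonal M, ∑ ij ∈ Finset.HasAntidiagonal.antidiagonal k,
          cnm ab.1 ij.1 * cnm ab.2 ij.2 : ℕ) : ℚ) := by
    intro M k
    rw [Polynomial.finset_sum_coeff]
    push_cast
    refine Finset.sum_congr rfl fun ab _ => ?_
    rw [Polynomial.coeff_mul]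
    push_cast
    refine Finset.sum_congr rfl fun ij _ => ?_
    rw [Gx_coeff, Gx_coeff]
  ext k
  rw [Polynomial.coeff_add, Gx_coeff]
  cases k with
  | zero =>
    have hX0 : ((X : Polynomial ℚ) * ∑ ab ∈ Finset.HasAntidiagonal.antidiagonal n, Gx ab.1 * Gx ab.2).coeff 0
        = 0 := by
      rw [Polynomial.mul_coeff_zero, Polynomial.coeff_X_zero, zero_mul]
    rw [hX0, add_zero, hS, conv_nat (n + 1) 0 (by omega)]
    norm_num [cnm]
  | succ k' =>
    rw [Polynomial.coeff_X_mul, hS, hS]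
    by_cases hk : k' + 1 ≤ n + 1
    · rw [conv_nat (n + 1) (k' + 1) hk, conv_nat n k' (by omega)]
      have hk' : k' ≤ n := by omega
      have h1 : n + 2 - (k' + 1) = (n - k') + 1 := by omega
      have h2 : n + 1 - (k' + 1) = n - k' := by omega
      have harith : cnm (n + 2) (k' + 1)
          = catalan (n + 1 - (k' + 1) + 1) * ((n + 1 - (k' + 1)).choose (k' + 1))
            + catalan (n - k' + 1) * ((n - k').choose k') := by
        rw [cnm, h1, h2, Nat.choose_succ_succ (n - k') k']
        ring
      rw [harith]
      push_cast
      ring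
    · rw [conv_zero (n + 1) (k' + 1) (by omega), conv_zero n k' (by omega),
        cnm_eq_zero (by omega)]
      norm_num

lemma gPoly_eq_aeval (n : ℕ) :
    gPoly n = Polynomial.aeval ((X : Polynomial ℚ) - 1) (Gx n) := by
  rw [Gx, map_sum]
  simp only [map_mul, Polynomial.aeval_C, map_pow, Polynomial.aeval_X,
    Polynomial.algebraMap_eq]
  rw [gPoly]
  refine Finset.sum_subset ?_ ?_
  · intro m hm
    rw [Finset.mem_range] at hm ⊢
    omega
  · intro m hm hm'
    rw [Finset.mem_range] at hm hm'
    have : cnm n m = 0 := cnm_eq_zero (by omega)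
    rw [show (catalan (n - m) * (n - m).choose m : ℕ) = cnm n m from rfl, this]
    simp

lemma gPoly_rec (n : ℕ) :
    gPoly (n + 2) = (∑ ab ∈ Finset.HasAntidiagonal.antidiagonal (n + 1), gPoly ab.1 * gPoly ab.2)
      + (X - 1) * ∑ ab ∈ Finset.HasAntidiagonal.antidiagonal n, gPoly ab.1 * gPoly ab.2 := by
  simp only [gPoly_eq_aeval]
  have := congrArg (Polynomial.aeval ((X : Polynomial ℚ) - 1)) (Gx_rec n)
  simpa [map_add, map_mul, map_sum, Polynomial.aeval_X] using this

lemma gPoly_zero : gPoly 0 = 1 := by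
  simp [gPoly]

lemma gPoly_one : gPoly 1 = 1 := by
  simp [gPoly, catalan_one]

lemma PP_eq_gPoly : ∀ n, PP (Finset.Icc 1 n) = gPoly n := by
  intro n
  induction n using Nat.strong_induction_on with
  | _ n ih =>
    match n with
    | 0 => rw [Finset.Icc_eq_empty (by omega), PP_empty, gPoly_zero]
    | 1 => rw [Finset.Icc_self, PP_singleton, gPoly_one]
    | (m + 2) =>
      rw [show m + 2 = (m + 1) + 1 from rfl, PP_rec (m + 1), gPoly_rec m]
      congr 1
      · rw [Finset.Nat.sum_antidiagonal_eq_sum_range_succ_mk]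
        refine Finset.sum_congr rfl fun a ha => ?_
        rw [Finset.mem_range] at ha
        rw [ih a (by omega), ih (m + 1 - a) (by omega)]
      · congr 1
        rw [Finset.Nat.sum_antidiagonal_eq_sum_range_succ_mk]
        refine Finset.sum_congr rfl fun a ha => ?_
        rw [Finset.mem_range] at ha
        have : m + 1 - 1 - a = m - a := by omega
        rw [this, ih a (by omega), ih (m - a) (by omega)]

end AuxNC
/-- For `d ≥ 1` and `k ≥ 0`, the number of noncrossing partitions of
`[d]` with exactly `k` nonsingleton blocks is the coefficient of `x^k` in `g_d(x)`;
equivalently `Σ_{π ∈ NC(d)} x^{block(π)} = g_d(x)`. -/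
theorem stmt3 (d : ℕ) (hd : 1 ≤ d) (k : ℕ) :
    (((NCd d).filter fun P => blockCount P = k).card : ℚ) = (gPoly d).coeff k ∧
    ∑ P ∈ NCd d, (X : Polynomial ℚ) ^ blockCount P = gPoly d := by
  have h2 : ∑ P ∈ NCd d, (X : Polynomial ℚ) ^ blockCount P = gPoly d := by
    rw [NCd_eq, ← PP_eq_gPoly d]
    rfl
  refine ⟨?_, h2⟩
  rw [← h2, Polynomial.finset_sum_coeff]
  simp only [Polynomial.coeff_X_pow]
  rw [Finset.sum_boole]
  norm_num
  congr 1
  refine Finset.filter_congr fun x _ => ?_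
  exact eq_comm
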